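/- arXiv:1403.4291 — 5 statements merged into one kernel-verified Lean document; each statement's English description precedes it below -/
import Mathlib

section
/- Let d ≥ 1, let μ be a Borel probability measure on [0,1]^d with uniform marginals and diagonal δ(λ) = μ([0,λ]^d), and let ρ be a Borel probability measure on [0,1) (the law of the mixing variable Λ). Then, with all integrals taken in [0,∞], (1/d) ∫_{[0,1)} (1−λ)^{-1} dρ(λ) ≤ ∫_{[0,1)} (1−δ(λ))^{-1} dρ(λ) ≤ ∫_{[0,1)} (1−λ)^{-1} dρ(λ). The middle quantity is the expected number E[N_V] of draws from μ needed to produce one sample of the rejection-sampling proposal. -/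
open MeasureTheory
open scoped ENNReal

/-- Bounds on the expected number of draws of the rejection
sampling algorithm: if `μ` is a Borel probability measure on `[0,1]^d` (`d ≥ 1`)
with uniform marginals and diagonal `δ(λ) = μ([0,λ]^d)`, and `ρ` is a Borel
probability measure on `[0,1)`, then (with integrals valued in `[0,∞]`)
`(1/d) ∫ (1−λ)⁻¹ dρ ≤ ∫ (1−δ(λ))⁻¹ dρ ≤ ∫ (1−λ)⁻¹ dρ`. -/
theorem expected_waiting_time_bounds
    {d : ℕ} (hd : 1 ≤ d) (μ : Measure (Fin d → ℝ)) [IsProbabilityMeasure μ]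
    (hmarg : ∀ i : Fin d, μ.map (fun u => u i) = volume.restrict (Set.Icc (0:ℝ) 1))
    (ρ : Measure ℝ) [IsProbabilityMeasure ρ] (hρ : ρ (Set.Ico (0:ℝ) 1) = 1) :
    (d : ℝ≥0∞)⁻¹ * ∫⁻ l in Set.Ico (0:ℝ) 1, (ENNReal.ofReal (1 - l))⁻¹ ∂ρ
        ≤ ∫⁻ l in Set.Ico (0:ℝ) 1,
            (1 - μ (Set.pi Set.univ fun _ => Set.Icc (0:ℝ) l))⁻¹ ∂ρ ∧
    ∫⁻ l in Set.Ico (0:ℝ) 1,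
        (1 - μ (Set.pi Set.univ fun _ => Set.Icc (0:ℝ) l))⁻¹ ∂ρ
      ≤ ∫⁻ l in Set.Ico (0:ℝ) 1, (ENNReal.ofReal (1 - l))⁻¹ ∂ρ := by
  have hImeas : MeasurableSet (Set.Ico (0:ℝ) 1) := measurableSet_Ico
  -- marginal computation: μ (u i ∈ Icc 0 l) = ofReal l for l ∈ [0,1)
  have hpre : ∀ (i : Fin d) (l : ℝ), l ∈ Set.Ico (0:ℝ) 1 →
      μ ((fun u : Fin d → ℝ => u i) ⁻¹' Set.Icc 0 l) = ENNReal.ofReal l := by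
    intro i l hl
    have h2 := Measure.map_apply (measurable_pi_apply i)
      (measurableSet_Icc : MeasurableSet (Set.Icc (0:ℝ) l)) (μ := μ)
    rw [hmarg i] at h2
    rw [← h2, Measure.restrict_apply measurableSet_Icc]
    have : Set.Icc (0:ℝ) l ∩ Set.Icc 0 1 = Set.Icc 0 l := by
      apply Set.inter_eq_self_of_subset_left
      exact Set.Icc_subset_Icc le_rfl hl.2.le
    rw [this, Real.volume_Icc, sub_zero]
  have hboxmeas : ∀ l : ℝ, MeasurableSet (Set.pi Set.univ fun _ : Fin d => Set.Icc (0:ℝ) l) :=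
    fun l => MeasurableSet.univ_pi fun _ => measurableSet_Icc
  -- box probability ≤ ofReal l
  have hbox_le : ∀ l ∈ Set.Ico (0:ℝ) 1,
      μ (Set.pi Set.univ fun _ : Fin d => Set.Icc (0:ℝ) l) ≤ ENNReal.ofReal l := by
    intro l hl
    have i0 : Fin d := ⟨0, hd⟩
    calc μ (Set.pi Set.univ fun _ : Fin d => Set.Icc (0:ℝ) l)
        ≤ μ ((fun u : Fin d → ℝ => u i0) ⁻¹' Set.Icc 0 l) := by
          apply measure_mono; intro u hu; exact hu i0 (Set.mem_univ _)
      _ = ENNReal.ofReal l := hpre i0 l hl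
  -- complement bound: 1 - μ box ≤ d * ofReal (1 - l)
  have hcompl : ∀ l ∈ Set.Ico (0:ℝ) 1,
      1 - μ (Set.pi Set.univ fun _ : Fin d => Set.Icc (0:ℝ) l)
        ≤ (d : ℝ≥0∞) * ENNReal.ofReal (1 - l) := by
    intro l hl
    have h1 : 1 - μ (Set.pi Set.univ fun _ : Fin d => Set.Icc (0:ℝ) l)
        = μ (Set.pi Set.univ fun _ : Fin d => Set.Icc (0:ℝ) l)ᶜ := by
      rw [prob_compl_eq_one_sub (hboxmeas l)]
    rw [h1]
    have hsub : (Set.pi Set.univ fun _ : Fin d => Set.Icc (0:ℝ) l)ᶜ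
        ⊆ ⋃ i : Fin d, ((fun u : Fin d → ℝ => u i) ⁻¹' Set.Icc 0 l)ᶜ := by
      intro u hu
      simp only [Set.mem_compl_iff, Set.mem_pi, Set.mem_univ, true_implies, not_forall] at hu
      obtain ⟨i, hi⟩ := hu
      exact Set.mem_iUnion.2 ⟨i, hi⟩
    calc μ (Set.pi Set.univ fun _ : Fin d => Set.Icc (0:ℝ) l)ᶜ
        ≤ ∑ i : Fin d, μ ((fun u : Fin d → ℝ => u i) ⁻¹' Set.Icc 0 l)ᶜ :=
          (measure_mono hsub).trans (measure_iUnion_fintype_le _ _)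
      _ = ∑ _i : Fin d, ENNReal.ofReal (1 - l) := by
          apply Finset.sum_congr rfl
          intro i _
          rw [prob_compl_eq_one_sub ((measurable_pi_apply i) measurableSet_Icc),
            hpre i l hl, ← ENNReal.ofReal_one, ← ENNReal.ofReal_sub _ hl.1]
      _ = (d : ℝ≥0∞) * ENNReal.ofReal (1 - l) := by
          simp [Finset.sum_const, mul_comm]
  constructor
  · -- lower bound
    have hd0 : (d : ℝ≥0∞) ≠ 0 := Nat.cast_ne_zero.mpr (by omega)
    rw [← lintegral_const_mul' _ _ (ENNReal.inv_ne_top.2 hd0)]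
    apply lintegral_mono_ae
    rw [ae_restrict_iff' hImeas]
    filter_upwards with l hl
    have key : 1 - μ (Set.pi Set.univ fun _ : Fin d => Set.Icc (0:ℝ) l)
        ≤ (d : ℝ≥0∞) * ENNReal.ofReal (1 - l) := hcompl l hl
    calc (d : ℝ≥0∞)⁻¹ * (ENNReal.ofReal (1 - l))⁻¹
        = ((d : ℝ≥0∞) * ENNReal.ofReal (1 - l))⁻¹ := by
          rw [ENNReal.mul_inv (Or.inl hd0) (Or.inl (ENNReal.natCast_ne_top d))]
      _ ≤ (1 - μ (Set.pi Set.univ fun _ : Fin d => Set.Icc (0:ℝ) l))⁻¹ :=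
          ENNReal.inv_le_inv' key
  · apply lintegral_mono_ae
    rw [ae_restrict_iff' hImeas]
    filter_upwards with l hl
    apply ENNReal.inv_le_inv'
    calc ENNReal.ofReal (1 - l) = 1 - ENNReal.ofReal l := by
          rw [← ENNReal.ofReal_one, ← ENNReal.ofReal_sub _ hl.1]
      _ ≤ 1 - μ (Set.pi Set.univ fun _ : Fin d => Set.Icc (0:ℝ) l) :=
          tsub_le_tsub_left (hbox_le l hl) 1
end

section
/- Let μ be a Borel probability measure on [0,1]^d and ρ a Borel probability measure on [0,1) such that μ([0,λ]^d) < 1 for ρ-almost every λ. Define the rejection-sampling proposal measure ν by ν(A) = ∫_{[0,1)} μ(A \ [0,λ]^d) / (1 − μ([0,λ]^d)) dρ(λ) for Borel sets A ⊆ [0,1]^d. Then ν equals μ with density g, i.e. ν(A) = ∫_A g dμ for all Borel A, where g(u) = ∫_{[0,1)} 1{λ < max_{1≤i≤d} u_i} / (1 − μ([0,λ]^d)) dρ(λ). Consequently μ is absolutely continuous with respect to ν on the set where g > 0, with Radon–Nikodym derivative w(u) = g(u)^{-1}. -/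
open MeasureTheory
open scoped ENNReal

/-- The rejection-sampling proposal measure
`ν(A) = ∫ μ(A \ [0,λ]^d)/(1 − μ([0,λ]^d)) dρ(λ)` has density
`g(u) = ∫ 1{λ < max_i u_i}/(1 − μ([0,λ]^d)) dρ(λ)` with respect to `μ`, i.e.
`ν(A) = ∫_A g dμ` for all Borel `A`; consequently `μ` is absolutely continuous
with respect to `ν` on `{g > 0}` with Radon–Nikodym derivative `w = g⁻¹`, i.e.
`∫_A g⁻¹ dν = μ(A)` for all Borel `A ⊆ {g > 0}`. -/
theorem rejection_proposal_density
    {d : ℕ} [NeZero d] (μ : Measure (Fin d → ℝ)) [IsProbabilityMeasure μ]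
    (hμcube : μ (Set.pi Set.univ fun _ => Set.Icc (0:ℝ) 1) = 1)
    (ρ : Measure ℝ) [IsProbabilityMeasure ρ] (hρ : ρ (Set.Ico (0:ℝ) 1) = 1)
    (hlt : ∀ᵐ l ∂ρ, μ (Set.pi Set.univ fun _ => Set.Icc (0:ℝ) l) < 1)
    (g : (Fin d → ℝ) → ℝ≥0∞)
    (hg : ∀ u, g u = ∫⁻ l in Set.Ico (0:ℝ) 1,
        (if l < ⨆ i, u i then
          (1 - μ (Set.pi Set.univ fun _ => Set.Icc (0:ℝ) l))⁻¹ else 0) ∂ρ) :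
    (∀ A : Set (Fin d → ℝ), MeasurableSet A →
      ∫⁻ l in Set.Ico (0:ℝ) 1,
          μ (A \ Set.pi Set.univ fun _ => Set.Icc (0:ℝ) l)
            / (1 - μ (Set.pi Set.univ fun _ => Set.Icc (0:ℝ) l)) ∂ρ
        = ∫⁻ u in A, g u ∂μ) ∧
    (∀ A : Set (Fin d → ℝ), MeasurableSet A → A ⊆ {u | 0 < g u} →
      ∫⁻ u in A, (g u)⁻¹ ∂(μ.withDensity g) = μ A) := by
  classical
  haveI : Nonempty (Fin d) := ⟨⟨0, Nat.pos_of_ne_zero (NeZero.ne d)⟩⟩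
  set C : ℝ → Set (Fin d → ℝ) := fun l => Set.pi Set.univ fun _ => Set.Icc (0:ℝ) l with hCdef
  have hCmeas : ∀ l, MeasurableSet (C l) := fun l =>
    MeasurableSet.univ_pi fun _ => measurableSet_Icc
  have hδmeas : Measurable fun l => μ (C l) := by
    apply Monotone.measurable
    intro a b hab
    exact measure_mono (Set.pi_mono fun i _ => Set.Icc_subset_Icc le_rfl hab)
  have hcmeas : Measurable fun l => (1 - μ (C l))⁻¹ :=
    (measurable_const.sub hδmeas).inv
  -- Part 1
  have key : ∀ A : Set (Fin d → ℝ), MeasurableSet A →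
      ∫⁻ l in Set.Ico (0:ℝ) 1, μ (A \ C l) / (1 - μ (C l)) ∂ρ
        = ∫⁻ u in A, g u ∂μ := by
    intro A hA
    set F : ℝ → (Fin d → ℝ) → ℝ≥0∞ :=
      fun l u => if u ∈ C l then 0 else (1 - μ (C l))⁻¹ with hFdef
    have hFunc : Measurable (Function.uncurry F) := by
      have hS : MeasurableSet {p : ℝ × (Fin d → ℝ) | p.2 ∈ C p.1} := by
        have hset : {p : ℝ × (Fin d → ℝ) | p.2 ∈ C p.1}
            = ⋂ i, ({p : ℝ × (Fin d → ℝ) | 0 ≤ p.2 i} ∩ {p | p.2 i ≤ p.1}) := by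
          ext p
          simp [hCdef, Set.mem_pi, Set.mem_Icc, Set.mem_iInter, forall_and, Pi.le_def]
        rw [hset]
        refine MeasurableSet.iInter fun i => MeasurableSet.inter ?_ ?_
        · exact measurableSet_le measurable_const (measurable_snd.eval (a := i))
        · exact measurableSet_le (measurable_snd.eval (a := i)) measurable_fst
      have huncurry : Function.uncurry F
          = fun p : ℝ × (Fin d → ℝ) => if p.2 ∈ C p.1 then 0 else (1 - μ (C p.1))⁻¹ := by
        funext p
        simp [Function.uncurry, hFdef]
      rw [huncurry]
      exact Measurable.ite hS measurable_const (hcmeas.comp measurable_fst)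
    have h1 : ∀ l, μ (A \ C l) / (1 - μ (C l)) = ∫⁻ u in A, F l u ∂μ := by
      intro l
      calc μ (A \ C l) / (1 - μ (C l))
          = (1 - μ (C l))⁻¹ * (μ.restrict A) ((C l)ᶜ) := by
            rw [ENNReal.div_eq_inv_mul, Measure.restrict_apply (hCmeas l).compl,
              Set.inter_comm, ← Set.diff_eq]
        _ = ∫⁻ u in A, (C l)ᶜ.indicator (fun _ => (1 - μ (C l))⁻¹) u ∂μ :=
            (lintegral_indicator_const (hCmeas l).compl _).symm
        _ = ∫⁻ u in A, F l u ∂μ := lintegral_congr fun u => by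
            by_cases h : u ∈ C l <;> simp [hFdef, Set.indicator, h]
    have hswap : ∫⁻ l in Set.Ico (0:ℝ) 1, ∫⁻ u in A, F l u ∂μ ∂ρ
        = ∫⁻ u in A, ∫⁻ l in Set.Ico (0:ℝ) 1, F l u ∂ρ ∂μ :=
      lintegral_lintegral_swap hFunc.aemeasurable
    have hae : ∀ᵐ u ∂μ, u ∈ C 1 := by
      rw [ae_iff]
      have hcompl : {u | ¬ u ∈ C 1} = (C 1)ᶜ := rfl
      rw [hcompl, measure_compl (hCmeas 1) (measure_ne_top μ _)]
      rw [show μ (C 1) = 1 from hμcube, measure_univ]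
      simp
    have hlast : ∫⁻ u in A, ∫⁻ l in Set.Ico (0:ℝ) 1, F l u ∂ρ ∂μ = ∫⁻ u in A, g u ∂μ := by
      refine lintegral_congr_ae ?_
      filter_upwards [ae_restrict_of_ae hae] with u hu
      rw [hg u]
      refine setLIntegral_congr_fun measurableSet_Ico (fun l _ => ?_)
      have hb : BddAbove (Set.range u) := (Set.finite_range u).bddAbove
      have hmem : u ∈ C l ↔ (⨆ i, u i) ≤ l := by
        rw [ciSup_le_iff hb]
        constructor
        · exact fun h i => (h i (Set.mem_univ i)).2
        · exact fun h i _ => ⟨(hu i (Set.mem_univ i)).1, h i⟩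
      by_cases h : l < ⨆ i, u i
      · rw [if_pos h]
        simp only [hFdef]
        rw [if_neg (fun hc => absurd (hmem.mp hc) (not_le.mpr h))]
      · rw [if_neg h]
        simp only [hFdef]
        rw [if_pos (hmem.mpr (not_lt.mp h))]
    calc ∫⁻ l in Set.Ico (0:ℝ) 1, μ (A \ C l) / (1 - μ (C l)) ∂ρ
        = ∫⁻ l in Set.Ico (0:ℝ) 1, ∫⁻ u in A, F l u ∂μ ∂ρ := lintegral_congr fun l => h1 l
      _ = ∫⁻ u in A, ∫⁻ l in Set.Ico (0:ℝ) 1, F l u ∂ρ ∂μ := hswap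
      _ = ∫⁻ u in A, g u ∂μ := hlast
  refine ⟨key, ?_⟩
  -- Part 2
  have hgmeas : Measurable g := by
    have hgdef : g = fun u => ∫⁻ l in Set.Ico (0:ℝ) 1,
        (fun (u : Fin d → ℝ) (l : ℝ) =>
          if l < ⨆ i, u i then (1 - μ (C l))⁻¹ else 0) u l ∂ρ := funext hg
    rw [hgdef]
    apply Measurable.lintegral_prod_right
    have hS : MeasurableSet {p : (Fin d → ℝ) × ℝ | p.2 < ⨆ i, p.1 i} := by
      have hset : {p : (Fin d → ℝ) × ℝ | p.2 < ⨆ i, p.1 i} = ⋃ i, {p | p.2 < p.1 i} := by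
        ext p
        simp only [Set.mem_setOf_eq, Set.mem_iUnion]
        exact lt_ciSup_iff (Set.finite_range p.1).bddAbove
      rw [hset]
      exact MeasurableSet.iUnion fun i =>
        measurableSet_lt measurable_snd (measurable_fst.eval (a := i))
    exact Measurable.ite hS (hcmeas.comp measurable_snd) measurable_const
  have hone : ∫⁻ u, g u ∂μ = 1 := by
    have hk := key Set.univ MeasurableSet.univ
    rw [Measure.restrict_univ] at hk
    rw [← hk]
    have hcong : ∀ᵐ l ∂ρ.restrict (Set.Ico (0:ℝ) 1),
        μ (Set.univ \ C l) / (1 - μ (C l)) = 1 := by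
      filter_upwards [ae_restrict_of_ae hlt] with l hl
      rw [← Set.compl_eq_univ_diff, measure_compl (hCmeas l) (measure_ne_top μ _), measure_univ]
      exact ENNReal.div_self (tsub_pos_of_lt hl).ne'
        (lt_of_le_of_lt tsub_le_self ENNReal.one_lt_top).ne
    rw [lintegral_congr_ae hcong, lintegral_one, Measure.restrict_apply_univ, hρ]
  have hfin : ∀ᵐ u ∂μ, g u ≠ ∞ := by
    filter_upwards [ae_lt_top hgmeas (hone ▸ ENNReal.one_ne_top)] with u hu using hu.ne
  intro A hA hAg
  rw [restrict_withDensity hA,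
    lintegral_withDensity_eq_lintegral_mul _ hgmeas
      (show Measurable fun u => (g u)⁻¹ from hgmeas.inv)]
  have hcong : ∀ᵐ u ∂μ.restrict A, (g * fun u => (g u)⁻¹) u = 1 := by
    filter_upwards [ae_restrict_mem hA, ae_restrict_of_ae hfin] with u huA hufin
    exact ENNReal.mul_inv_cancel (hAg huA).ne' hufin
  rw [lintegral_congr_ae hcong, lintegral_one, Measure.restrict_apply_univ]
end

section
/- Let α ≥ 1, β > 1 and γ ∈ [0,1). Let ρ be the measure on [0,1) given by ρ = (1−γ)·δ_0 + the measure with Lebesgue density λ ↦ γ·β·α·λ^{α−1}(1−λ^α)^{β−1} on (0,1), where δ_0 is the Dirac measure at 0. Then ρ is a probability measure, and for every t ∈ [0,1], ∫_{[0,t]} (1−λ^α)^{-1} dρ(λ) = (β − 1 + γ(1 − β(1−t^α)^{β−1})) / (β − 1); in particular, for t = 1 this value equals 1 + γ/(β−1). -/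
open MeasureTheory Set Filter
open scoped ENNReal NNReal

private lemma aux_deriv (α p : ℝ) (hα : 1 ≤ α) (hp : 0 < p) {l : ℝ}
    (hl0 : 0 < l) (hl1 : l < 1) :
    HasDerivAt (fun x : ℝ => -(1 - x ^ α) ^ p / p)
      (α * l ^ (α - 1) * (1 - l ^ α) ^ (p - 1)) l := by
  have hlα : l ^ α < 1 := Real.rpow_lt_one hl0.le hl1 (by linarith)
  have hne : (1 : ℝ) - l ^ α ≠ 0 := ne_of_gt (show (0:ℝ) < 1 - l ^ α by linarith)
  have h1 : HasDerivAt (fun x : ℝ => x ^ α) (α * l ^ (α - 1)) l :=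
    Real.hasDerivAt_rpow_const (Or.inl hl0.ne')
  have h2 : HasDerivAt (fun x : ℝ => 1 - x ^ α) (-(α * l ^ (α - 1))) l := h1.const_sub 1
  have h3 := (h2.rpow_const (p := p) (Or.inl hne)).neg.div_const p
  refine h3.congr_deriv ?_
  rw [div_eq_iff hp.ne']
  ring

private lemma aux_cont (α p : ℝ) (hα : 0 < α) (hp : 0 < p) :
    Continuous fun x : ℝ => -(1 - x ^ α) ^ p / p := by
  have c1 : Continuous fun x : ℝ => x ^ α :=
    continuous_iff_continuousAt.2 fun x => Real.continuousAt_rpow_const x α (Or.inr hα.le)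
  have c2 : Continuous fun x : ℝ => x ^ p :=
    continuous_iff_continuousAt.2 fun x => Real.continuousAt_rpow_const x p (Or.inr hp.le)
  exact ((c2.comp (continuous_const.sub c1)).neg).div_const p

private lemma aux_meas (α p : ℝ) :
    Measurable fun l : ℝ => α * l ^ (α - 1) * (1 - l ^ α) ^ (p - 1) := by
  fun_prop

private lemma aux_intble (α p : ℝ) (hα : 1 ≤ α) (hp : 0 < p) :
    IntervalIntegrable (fun l : ℝ => α * l ^ (α - 1) * (1 - l ^ α) ^ (p - 1)) volume 0 1 := by
  have hg0 : IntervalIntegrable (fun x : ℝ => x ^ (p - 1)) volume (1 - 0) (1 - 1) :=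
    intervalIntegral.intervalIntegrable_rpow' (by linarith)
  have hg1 := (hg0.comp_sub_left 1)
  simp only [sub_sub_cancel, sub_zero, sub_self] at hg1
  have hg : IntervalIntegrable (fun l : ℝ => α * ((1 - l) ^ (p - 1) + 1)) volume 0 1 :=
    ((hg1.add intervalIntegrable_const).const_mul α)
  rw [intervalIntegrable_iff_integrableOn_Ioo_of_le zero_le_one] at hg ⊢
  refine hg.mono' (aux_meas α p).aestronglyMeasurable ?_
  refine (ae_restrict_iff' measurableSet_Ioo).2 (ae_of_all _ ?_)
  rintro l ⟨hl0, hl1⟩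
  have hα0 : (0:ℝ) < α := by linarith
  have hlα : l ^ α < 1 := Real.rpow_lt_one hl0.le hl1 (by linarith)
  have hx : (0:ℝ) < 1 - l ^ α := by linarith
  have hl1' : l ^ (α - 1) ≤ 1 := Real.rpow_le_one hl0.le hl1.le (by linarith)
  have hlnn : (0:ℝ) ≤ l ^ (α - 1) := Real.rpow_nonneg hl0.le _
  have hynn : (0:ℝ) ≤ (1 - l ^ α) ^ (p - 1) := Real.rpow_nonneg hx.le _
  have h1l : (0:ℝ) < 1 - l := by linarith
  have hbound : (1 - l ^ α) ^ (p - 1) ≤ (1 - l) ^ (p - 1) + 1 := by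
    rcases le_or_gt p 1 with hple | hpgt
    · have hlel : l ^ α ≤ l := by
        calc l ^ α ≤ l ^ (1:ℝ) := Real.rpow_le_rpow_of_exponent_ge hl0 hl1.le hα
        _ = l := Real.rpow_one l
      have : (1 - l ^ α) ^ (p - 1) ≤ (1 - l) ^ (p - 1) :=
        Real.rpow_le_rpow_of_nonpos h1l (by linarith) (by linarith)
      have h0 : (0:ℝ) ≤ (1 - l) ^ (p-1) := Real.rpow_nonneg h1l.le _
      linarith
    · have hlα0 : (0:ℝ) ≤ l ^ α := Real.rpow_nonneg hl0.le α
      have : (1 - l ^ α) ^ (p - 1) ≤ 1 := Real.rpow_le_one hx.le (by linarith) (by linarith)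
      have h0 : (0:ℝ) ≤ (1 - l) ^ (p-1) := Real.rpow_nonneg h1l.le _
      linarith
  rw [Real.norm_eq_abs, abs_of_nonneg (by positivity)]
  calc α * l ^ (α - 1) * (1 - l ^ α) ^ (p - 1)
      ≤ α * 1 * ((1 - l) ^ (p - 1) + 1) := by
        exact mul_le_mul (by nlinarith) hbound hynn (by positivity)
    _ = α * ((1 - l) ^ (p - 1) + 1) := by ring

private lemma aux_val (α p : ℝ) (hα : 1 ≤ α) (hp : 0 < p) {t : ℝ} (ht0 : 0 ≤ t) (ht1 : t ≤ 1) :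
    ∫ l in (0:ℝ)..t, α * l ^ (α - 1) * (1 - l ^ α) ^ (p - 1)
      = (1 - (1 - t ^ α) ^ p) / p := by
  rcases ht0.eq_or_lt with rfl | ht0'
  · simp [Real.zero_rpow (by linarith : α ≠ 0)]
  · have hsub : uIcc (0:ℝ) t ⊆ uIcc (0:ℝ) 1 := by
      rw [uIcc_of_le ht0, uIcc_of_le zero_le_one]
      exact Icc_subset_Icc_right ht1
    have := intervalIntegral.integral_eq_sub_of_hasDerivAt_of_tendsto
      (f := fun x : ℝ => -(1 - x ^ α) ^ p / p)
      (f' := fun l : ℝ => α * l ^ (α - 1) * (1 - l ^ α) ^ (p - 1)) ht0'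
      (fun x hx => aux_deriv α p hα hp hx.1 (lt_of_lt_of_le hx.2 ht1))
      ((aux_intble α p hα hp).mono_set hsub)
      (((aux_cont α p (by linarith) hp).tendsto 0).mono_left nhdsWithin_le_nhds)
      (((aux_cont α p (by linarith) hp).tendsto t).mono_left nhdsWithin_le_nhds)
    rw [this, Real.zero_rpow (by linarith : α ≠ 0)]
    rw [sub_zero, Real.one_rpow]
    field_simp
    ring

/-- Explicit weight function for the continuous mixing
distribution of the rejection sampling algorithm: with
`ρ = (1−γ)·δ₀ + (density γβα λ^{α−1}(1−λ^α)^{β−1} on (0,1))·Lebesgue`,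
`ρ` is a probability measure, and for all `t ∈ [0,1]`,
`∫_{[0,t]} (1−λ^α)⁻¹ dρ(λ) = (β − 1 + γ(1 − β(1−t^α)^{β−1}))/(β−1)`;
in particular at `t = 1` the value is `1 + γ/(β−1)`. -/
theorem rejection_continuous_mixing_weights
    (α β γ : ℝ) (hα : 1 ≤ α) (hβ : 1 < β) (hγ : γ ∈ Set.Ico (0:ℝ) 1)
    (ρ : Measure ℝ)
    (hρ : ρ = ENNReal.ofReal (1 - γ) • Measure.dirac (0:ℝ) +
      (volume.restrict (Set.Ioo (0:ℝ) 1)).withDensity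
        (fun l => ENNReal.ofReal (γ * β * α * l ^ (α - 1) * (1 - l ^ α) ^ (β - 1)))) :
    IsProbabilityMeasure ρ ∧
    (∀ t ∈ Set.Icc (0:ℝ) 1,
      ∫ l in Set.Icc (0:ℝ) t, (1 - l ^ α)⁻¹ ∂ρ
        = (β - 1 + γ * (1 - β * (1 - t ^ α) ^ (β - 1))) / (β - 1)) ∧
    ∫ l in Set.Icc (0:ℝ) 1, (1 - l ^ α)⁻¹ ∂ρ = 1 + γ / (β - 1) := by
  classical
  obtain ⟨hγ0, hγ1⟩ := hγ
  have hβ0 : (0:ℝ) < β := by linarith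
  have hβ1 : (0:ℝ) < β - 1 := by linarith
  have hα0 : (0:ℝ) < α := by linarith
  set g : ℝ → ℝ := fun l => γ * β * α * l ^ (α - 1) * (1 - l ^ α) ^ (β - 1) with hgdef
  have hgm : Measurable g := by simp only [hgdef]; fun_prop
  have hgnn : ∀ l ∈ Ioo (0:ℝ) 1, 0 ≤ g l := by
    rintro l ⟨hl0, hl1⟩
    have hlα : l ^ α < 1 := Real.rpow_lt_one hl0.le hl1 hα0
    have h1 : (0:ℝ) ≤ l ^ (α - 1) := Real.rpow_nonneg hl0.le _
    have h2 : (0:ℝ) ≤ (1 - l ^ α) ^ (β - 1) :=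
      Real.rpow_nonneg (by linarith : (0:ℝ) ≤ 1 - l ^ α) _
    exact mul_nonneg (mul_nonneg (mul_nonneg (mul_nonneg hγ0 hβ0.le) hα0.le) h1) h2
  have hgeq : g = fun l => (γ * β) * (α * l ^ (α - 1) * (1 - l ^ α) ^ (β - 1)) := by
    funext l; simp only [hgdef]; ring
  have hgint : IntegrableOn g (Ioo (0:ℝ) 1) volume := by
    rw [hgeq]
    have h := (aux_intble α β hα hβ0).const_mul (γ * β)
    rwa [intervalIntegrable_iff_integrableOn_Ioo_of_le zero_le_one] at h
  have hmass : ∫ l in Ioo (0:ℝ) 1, g l = γ := by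
    rw [hgeq, integral_const_mul, ← integral_Ioc_eq_integral_Ioo,
        ← intervalIntegral.integral_of_le zero_le_one,
        aux_val α β hα hβ0 zero_le_one le_rfl, Real.one_rpow, sub_self,
        Real.zero_rpow hβ0.ne', sub_zero]
    field_simp
  have hprob : IsProbabilityMeasure ρ := by
    constructor
    rw [hρ, Measure.add_apply, Measure.smul_apply, smul_eq_mul,
        withDensity_apply _ MeasurableSet.univ, Measure.restrict_univ]
    have h1 : ∫⁻ l, ENNReal.ofReal (g l) ∂(volume.restrict (Ioo (0:ℝ) 1))
        = ENNReal.ofReal γ := by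
      rw [← ofReal_integral_eq_lintegral_ofReal hgint
          ((ae_restrict_iff' measurableSet_Ioo).2 (ae_of_all _ hgnn)), hmass]
    rw [h1, measure_univ, mul_one, ← ENNReal.ofReal_add (by linarith) hγ0]
    norm_num
  have hmain : ∀ t ∈ Set.Icc (0:ℝ) 1,
      ∫ l in Set.Icc (0:ℝ) t, (1 - l ^ α)⁻¹ ∂ρ
        = (β - 1 + γ * (1 - β * (1 - t ^ α) ^ (β - 1))) / (β - 1) := by
    rintro t ⟨ht0, ht1⟩
    have hset : (Icc (0:ℝ) t ∩ Ioo 0 1 : Set ℝ) =ᵐ[volume] (Ioo (0:ℝ) t : Set ℝ) := by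
      rw [MeasureTheory.ae_eq_set]
      constructor
      · refine measure_mono_null (fun l hl => ?_) (measure_singleton t)
        obtain ⟨⟨⟨-, hlt⟩, hl0, hl1⟩, hn⟩ := hl
        simp only [mem_Ioo, not_and] at hn
        exact le_antisymm hlt (le_of_not_gt (hn hl0))
      · have hd : Ioo (0:ℝ) t \ (Icc 0 t ∩ Ioo 0 1) = ∅ := by
          rw [diff_eq_empty]
          rintro l ⟨hl0, hlt⟩
          exact ⟨⟨hl0.le, hlt.le⟩, hl0, lt_of_lt_of_le hlt ht1⟩
        simp [hd]
    have hρr : ρ.restrict (Set.Icc 0 t) =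
        ENNReal.ofReal (1 - γ) • Measure.dirac 0 +
        (volume.restrict (Ioo (0:ℝ) t)).withDensity (fun l => ENNReal.ofReal (g l)) := by
      rw [hρ, Measure.restrict_add, Measure.restrict_smul,
          restrict_dirac, if_pos (mem_Icc.2 ⟨le_refl (0:ℝ), ht0⟩),
          restrict_withDensity measurableSet_Icc,
          Measure.restrict_restrict measurableSet_Icc,
          Measure.restrict_congr_set hset]
    have int1 : Integrable (fun l : ℝ => (1 - l ^ α)⁻¹)
        (ENNReal.ofReal (1 - γ) • Measure.dirac 0) :=
      ((integrable_const ((1 - (0:ℝ) ^ α)⁻¹)).congr (ae_eq_dirac (fun l : ℝ => (1 - l ^ α)⁻¹)).symm).smul_measure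
        ENNReal.ofReal_ne_top
    have hgnn' : Measurable fun l : ℝ => Real.toNNReal (g l) := hgm.real_toNNReal
    have hkey : IntegrableOn
        (fun l : ℝ => (γ * β) * (α * l ^ (α - 1) * (1 - l ^ α) ^ (β - 1 - 1)))
        (Ioo (0:ℝ) t) volume := by
      have h := ((aux_intble α (β - 1) hα hβ1).mono_set
        (by rw [uIcc_of_le ht0, uIcc_of_le zero_le_one]
            exact Icc_subset_Icc_right ht1)).const_mul (γ * β)
      rwa [intervalIntegrable_iff_integrableOn_Ioo_of_le ht0] at h
    have haeq : ∀ᵐ l ∂(volume.restrict (Ioo (0:ℝ) t)),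
        (γ * β) * (α * l ^ (α - 1) * (1 - l ^ α) ^ (β - 1 - 1))
          = Real.toNNReal (g l) • (1 - l ^ α)⁻¹ := by
      refine (ae_restrict_iff' measurableSet_Ioo).2 (ae_of_all _ ?_)
      rintro l ⟨hl0, hlt⟩
      have hl1 : l < 1 := lt_of_lt_of_le hlt ht1
      have hlα : l ^ α < 1 := Real.rpow_lt_one hl0.le hl1 hα0
      have hx : (0:ℝ) < 1 - l ^ α := by linarith
      rw [NNReal.smul_def, Real.coe_toNNReal _ (hgnn l ⟨hl0, hl1⟩),
          Real.rpow_sub hx, Real.rpow_one]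
      simp only [hgdef]
      simp only [smul_eq_mul, div_eq_mul_inv]
      ring
    have int2 : Integrable (fun l : ℝ => (1 - l ^ α)⁻¹)
        ((volume.restrict (Ioo (0:ℝ) t)).withDensity fun l => ENNReal.ofReal (g l)) := by
      rw [show (fun l : ℝ => ENNReal.ofReal (g l))
            = fun l => ((Real.toNNReal (g l) : ℝ≥0) : ℝ≥0∞) from rfl,
          integrable_withDensity_iff_integrable_smul hgnn']
      exact hkey.congr haeq
    have e2 : ∫ l in Ioo (0:ℝ) t, Real.toNNReal (g l) • (1 - l ^ α)⁻¹
        = (γ * β) * ((1 - (1 - t ^ α) ^ (β - 1)) / (β - 1)) := by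
      rw [← integral_congr_ae haeq, integral_const_mul,
          ← integral_Ioc_eq_integral_Ioo, ← intervalIntegral.integral_of_le ht0,
          aux_val α (β - 1) hα hβ1 ht0 ht1]
    rw [hρr, integral_add_measure int1 int2, integral_smul_measure, integral_dirac,
        show (fun l : ℝ => ENNReal.ofReal (g l))
          = fun l => ((Real.toNNReal (g l) : ℝ≥0) : ℝ≥0∞) from rfl,
        integral_withDensity_eq_integral_smul hgnn', e2,
        ENNReal.toReal_ofReal (by linarith : (0:ℝ) ≤ 1 - γ),
        Real.zero_rpow hα0.ne', sub_zero, inv_one, smul_eq_mul, mul_one]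
    field_simp
    ring
  refine ⟨hprob, hmain, ?_⟩
  rw [hmain 1 ⟨zero_le_one, le_rfl⟩, Real.one_rpow, sub_self,
      Real.zero_rpow hβ1.ne', mul_zero, sub_zero, mul_one]
  field_simp
end

section
/- Let β > 1 and γ ∈ [0,1). Let ρ be the measure on [0,1) given by ρ = (1−γ)·δ_0 + the measure with Lebesgue density λ ↦ γ·β·(1−λ)^{β−1} on (0,1), where δ_0 is the Dirac measure at 0. Then ρ is a probability measure, and for every u ∈ (0,1]^d, (1/d) ∑_{i=1}^d ∫_{[0,u_i)} (1−λ)^{-1} dρ(λ) = (β − 1 + γ − γβ·d^{-1} ∑_{i=1}^d (1−u_i)^{β−1}) / (β − 1); equivalently, the direct-sampling weight function equals w(u) = (β−1) / (β − 1 + γ − γβ·d^{-1} ∑_{i=1}^d (1−u_i)^{β−1}). -/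
open MeasureTheory
open scoped ENNReal

lemma meas_inv : Measurable (fun l : ℝ => (1 - l)⁻¹) :=
  (measurable_const.sub measurable_id).inv

lemma integrable_inv_dirac : Integrable (fun l : ℝ => (1 - l)⁻¹) (Measure.dirac (0:ℝ)) := by
  refine ⟨meas_inv.aestronglyMeasurable, ?_⟩
  rw [HasFiniteIntegral, lintegral_dirac]
  exact enorm_lt_top

lemma interval_rpow_sub (β : ℝ) (hβ : 1 < β) (u : ℝ) :
    ∫ x in (0:ℝ)..u, (1 - x) ^ (β - 2) = (1 - (1 - u) ^ (β - 1)) / (β - 1) := by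
  rw [intervalIntegral.integral_comp_sub_left (fun x => x ^ (β - 2)) 1]
  rw [integral_rpow (Or.inl (by linarith))]
  rw [show β - 2 + 1 = β - 1 by ring, sub_zero, Real.one_rpow]

lemma interval_rpow_base (β : ℝ) (hβ : 1 < β) :
    ∫ x in (0:ℝ)..1, (1 - x) ^ (β - 1) = 1 / β := by
  rw [intervalIntegral.integral_comp_sub_left (fun x => x ^ (β - 1)) 1]
  rw [integral_rpow (Or.inl (by linarith))]
  rw [show β - 1 + 1 = β by ring, sub_zero, sub_self, Real.one_rpow,
    Real.zero_rpow (ne_of_gt (by linarith)), sub_zero]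

lemma ii_sub (r : ℝ) (hr : -1 < r) (u : ℝ) :
    IntervalIntegrable (fun x : ℝ => (1 - x) ^ r) volume 0 u := by
  have h := (intervalIntegral.intervalIntegrable_rpow' hr
    (a := 1 - u) (b := 1 - 0)).comp_sub_left 1
  simpa using h.symm

lemma key_int (β γ : ℝ) (hβ : 1 < β) (hγ0 : 0 ≤ γ) (hγ1 : γ < 1) (u : ℝ)
    (hu0 : 0 < u) (hu1 : u ≤ 1) :
    ∫ l in Set.Ico (0:ℝ) u, (1 - l)⁻¹
        ∂(ENNReal.ofReal (1 - γ) • Measure.dirac (0:ℝ) +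
          (volume.restrict (Set.Ioo (0:ℝ) 1)).withDensity
            (fun l => ENNReal.ofReal (γ * β * (1 - l) ^ (β - 1))))
      = (β - 1 + γ - γ * β * (1 - u) ^ (β - 1)) / (β - 1) := by
  classical
  set F : ℝ → NNReal := fun l => (γ * β * (1 - l) ^ (β - 1)).toNNReal with hF
  have hFmeas : Measurable F := by
    apply Measurable.real_toNNReal
    exact ((measurable_const.sub measurable_id).pow_const _).const_mul _
  have hdens : (fun l : ℝ => ENNReal.ofReal (γ * β * (1 - l) ^ (β - 1)))
      = fun l => (F l : ℝ≥0∞) := rfl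
  have hset : Set.Ico (0:ℝ) u ∩ Set.Ioo (0:ℝ) 1 = Set.Ioo 0 u := by
    ext x
    simp only [Set.mem_inter_iff, Set.mem_Ico, Set.mem_Ioo]
    constructor
    · rintro ⟨⟨h1, h2⟩, h3, h4⟩; exact ⟨h3, h2⟩
    · rintro ⟨h1, h2⟩; exact ⟨⟨h1.le, h2⟩, h1, lt_of_lt_of_le h2 hu1⟩
  have hpt : ∀ x ∈ Set.Ioo (0:ℝ) u,
      F x • (1 - x)⁻¹ = γ * β * (1 - x) ^ (β - 2) := by
    intro x hx
    have h1x : 0 < 1 - x := by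
      have h2 := hx.2; have := lt_of_lt_of_le h2 hu1; linarith
    have hnn : 0 ≤ γ * β * (1 - x) ^ (β - 1) := by positivity
    rw [NNReal.smul_def, hF, Real.coe_toNNReal _ hnn]
    have hexp : (1 - x) ^ (β - 1) = (1 - x) ^ (β - 2) * (1 - x) := by
      rw [show β - 1 = β - 2 + 1 by ring]
      exact Real.rpow_add_one h1x.ne' (β - 2)
    rw [hexp, smul_eq_mul, mul_assoc, mul_inv_cancel_right₀ h1x.ne']
  have hInt2 : IntegrableOn (fun l : ℝ => γ * β * (1 - l) ^ (β - 2)) (Set.Ioo 0 u) := by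
    have h := (ii_sub (β - 2) (by linarith) u).const_mul (γ * β)
    exact ((intervalIntegrable_iff_integrableOn_Ioc_of_le hu0.le).1 h).mono_set
      Set.Ioo_subset_Ioc_self
  rw [Measure.restrict_add, Measure.restrict_smul,
    restrict_dirac' measurableSet_Ico,
    if_pos (show (0:ℝ) ∈ Set.Ico 0 u from ⟨le_refl 0, hu0⟩),
    hdens, restrict_withDensity measurableSet_Ico,
    Measure.restrict_restrict measurableSet_Ico, hset]
  have hI1 : Integrable (fun l : ℝ => (1 - l)⁻¹)
      (ENNReal.ofReal (1 - γ) • Measure.dirac (0:ℝ)) :=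
    integrable_inv_dirac.smul_measure ENNReal.ofReal_ne_top
  have hI2 : Integrable (fun l : ℝ => (1 - l)⁻¹)
      ((volume.restrict (Set.Ioo (0:ℝ) u)).withDensity fun l => (F l : ℝ≥0∞)) := by
    rw [integrable_withDensity_iff_integrable_smul hFmeas]
    refine hInt2.congr ?_
    exact ((ae_restrict_iff' measurableSet_Ioo).2
      (Filter.Eventually.of_forall fun x hx => (hpt x hx).symm))
  rw [integral_add_measure hI1 hI2, integral_smul_measure, integral_dirac,
    integral_withDensity_eq_integral_smul hFmeas,
    setIntegral_congr_fun measurableSet_Ioo hpt,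
    ← integral_Ioc_eq_integral_Ioo,
    ← intervalIntegral.integral_of_le hu0.le,
    intervalIntegral.integral_const_mul, interval_rpow_sub β hβ u,
    ENNReal.toReal_ofReal (by linarith)]
  have hβ1 : β - 1 ≠ 0 := ne_of_gt (by linarith)
  field_simp
  ring

/-- Explicit weight function for the continuous mixing
distribution of the direct sampling algorithm: with
`ρ = (1−γ)·δ₀ + (density γβ(1−λ)^{β−1} on (0,1))·Lebesgue`, `ρ` is a probability
measure, and for every `u ∈ (0,1]^d`,
`(1/d) ∑_i ∫_{[0,u_i)} (1−λ)⁻¹ dρ(λ)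
  = (β − 1 + γ − γβ d⁻¹ ∑_i (1−u_i)^{β−1})/(β−1)`;
equivalently the direct-sampling weight function is
`w(u) = (β−1)/(β − 1 + γ − γβ d⁻¹ ∑_i (1−u_i)^{β−1})`. -/
theorem direct_continuous_mixing_weights
    {d : ℕ} (hd : 0 < d) (β γ : ℝ) (hβ : 1 < β) (hγ : γ ∈ Set.Ico (0:ℝ) 1)
    (ρ : Measure ℝ)
    (hρ : ρ = ENNReal.ofReal (1 - γ) • Measure.dirac (0:ℝ) +
      (volume.restrict (Set.Ioo (0:ℝ) 1)).withDensity
        (fun l => ENNReal.ofReal (γ * β * (1 - l) ^ (β - 1)))) :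
    IsProbabilityMeasure ρ ∧
    (∀ u : Fin d → ℝ, (∀ i, u i ∈ Set.Ioc (0:ℝ) 1) →
      (d : ℝ)⁻¹ * ∑ i : Fin d, ∫ l in Set.Ico (0:ℝ) (u i), (1 - l)⁻¹ ∂ρ
        = (β - 1 + γ - γ * β * (d : ℝ)⁻¹ * ∑ i : Fin d, (1 - u i) ^ (β - 1))
            / (β - 1)) ∧
    (∀ u : Fin d → ℝ, (∀ i, u i ∈ Set.Ioc (0:ℝ) 1) →
      ((d : ℝ)⁻¹ * ∑ i : Fin d, ∫ l in Set.Ico (0:ℝ) (u i), (1 - l)⁻¹ ∂ρ)⁻¹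
        = (β - 1)
            / (β - 1 + γ - γ * β * (d : ℝ)⁻¹ * ∑ i : Fin d, (1 - u i) ^ (β - 1))) := by
  obtain ⟨hγ0, hγ1⟩ := hγ
  have hd' : (d : ℝ) ≠ 0 := Nat.cast_ne_zero.2 hd.ne'
  have hβ1 : (0:ℝ) < β - 1 := by linarith
  -- probability
  have hprob : IsProbabilityMeasure ρ := by
    constructor
    rw [hρ, Measure.add_apply, Measure.smul_apply, measure_univ, smul_eq_mul, mul_one,
      withDensity_apply _ MeasurableSet.univ, Measure.restrict_univ]
    have hInt : Integrable (fun l : ℝ => γ * β * (1 - l) ^ (β - 1))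
        (volume.restrict (Set.Ioo (0:ℝ) 1)) := by
      have h := (ii_sub (β - 1) (by linarith) 1).const_mul (γ * β)
      exact ((intervalIntegrable_iff_integrableOn_Ioc_of_le zero_le_one).1 h).mono_set
        Set.Ioo_subset_Ioc_self
    have hnn : 0 ≤ᵐ[volume.restrict (Set.Ioo (0:ℝ) 1)]
        fun l : ℝ => γ * β * (1 - l) ^ (β - 1) := by
      refine (ae_restrict_iff' measurableSet_Ioo).2 (Filter.Eventually.of_forall ?_)
      intro x hx
      have : (0:ℝ) < 1 - x := by have := hx.2; linarith
      positivity
    rw [← ofReal_integral_eq_lintegral_ofReal hInt hnn,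
      ← integral_Ioc_eq_integral_Ioo, ← intervalIntegral.integral_of_le zero_le_one,
      intervalIntegral.integral_const_mul, interval_rpow_base β hβ,
      mul_one_div, mul_div_assoc, div_self (by linarith : β ≠ 0), mul_one,
      ← ENNReal.ofReal_add (by linarith) hγ0]
    norm_num
  have h2 : ∀ u : Fin d → ℝ, (∀ i, u i ∈ Set.Ioc (0:ℝ) 1) →
      (d : ℝ)⁻¹ * ∑ i : Fin d, ∫ l in Set.Ico (0:ℝ) (u i), (1 - l)⁻¹ ∂ρ
        = (β - 1 + γ - γ * β * (d : ℝ)⁻¹ * ∑ i : Fin d, (1 - u i) ^ (β - 1))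
            / (β - 1) := by
    intro u hu
    have hkey : ∀ i : Fin d, ∫ l in Set.Ico (0:ℝ) (u i), (1 - l)⁻¹ ∂ρ
        = (β - 1 + γ - γ * β * (1 - u i) ^ (β - 1)) / (β - 1) := by
      intro i
      rw [hρ]
      exact key_int β γ hβ hγ0 hγ1 (u i) (hu i).1 (hu i).2
    rw [Finset.sum_congr rfl (fun i _ => hkey i), ← Finset.sum_div,
      Finset.sum_sub_distrib, Finset.sum_add_distrib, Finset.sum_const,
      Finset.card_univ, Fintype.card_fin, ← Finset.mul_sum, nsmul_eq_mul]
    simp only [Finset.sum_const, Finset.card_univ, Fintype.card_fin, nsmul_eq_mul]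
    field_simp
  refine ⟨hprob, h2, fun u hu => ?_⟩
  rw [h2 u hu]
  exact inv_div _ _
end

section
/- Let μ be a Borel probability measure on [0,1]^d, let 0 = x_1 < x_2 < … < x_n < 1 with δ_k = μ([0,x_k]^d) < 1 for all k, and suppose s = x_{k*} for some k* ∈ {1,…,n} with s > 0. Define p̃_k = (1{x_k ≥ s} − 1{x_{k−1} ≥ s})(1 − δ_k) for k = 2,…,n and p̃_1 = 1{x_1 ≥ s}(1 − δ_1). Then: (i) ∑_{k=1}^n p̃_k = 1 − μ([0,s]^d); (ii) for every u ∈ [0,1]^d with max_{1≤i≤d} u_i > s, ∑_{k : x_k ≤ max_i u_i} p̃_k/(1 − δ_k) = 1, so the calibrated weight w(u) = (∑_{k=1}^n p̃_k)·(∑_{k : x_k ≤ max_i u_i} p̃_k/(1 − δ_k))^{-1} equals 1 − μ([0,s]^d); and (iii) consequently ∫_{[0,1]^d} 1{max_i u_i > s} · w(u) dμ(u) = (μ({u : max_i u_i > s}))². -/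
open MeasureTheory
open scoped ENNReal Classical

/-- Bounded relative error of the calibrated rejection-sampling
scheme for the rare-event functional `Ψ^{(s)}(u) = 1{max_i u_i > s}`: with atoms
`0 = x 1 < … < x n < 1`, diagonal values `δ k = μ([0, x k]^d) < 1`, `s = x k*` an
atom with `s > 0`, and unnormalized calibrated probabilities
`p̃ 1 = 1{x 1 ≥ s}(1 − δ 1)`, `p̃ k = (1{x k ≥ s} − 1{x (k−1) ≥ s})(1 − δ k)`,
one has: (i) `∑_k p̃ k = 1 − μ([0,s]^d)`; (ii) for every `u ∈ [0,1]^d` with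
`max_i u_i > s`, `∑_{k : x k ≤ max_i u_i} p̃ k/(1 − δ k) = 1` and the calibrated
weight `w(u)` equals `1 − μ([0,s]^d)`; (iii) consequently
`∫ 1{max_i u_i > s} · w(u) dμ(u) = μ({u : max_i u_i > s})²`. -/
theorem rare_event_calibrated_bounded_relative_error
    {d : ℕ} (hd : 0 < d) (μ : Measure (Fin d → ℝ)) [IsProbabilityMeasure μ]
    (hμcube : μ (Set.pi Set.univ fun _ => Set.Icc (0:ℝ) 1) = 1)
    (n : ℕ) (hn : 1 ≤ n) (x : ℕ → ℝ) (hx1 : x 1 = 0)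
    (hxmono : ∀ k, 1 ≤ k → k < n → x k < x (k + 1)) (hxn : x n < 1)
    (δ : ℕ → ℝ)
    (hδ : ∀ k, 1 ≤ k → k ≤ n →
      δ k = (μ (Set.pi Set.univ fun _ => Set.Icc (0:ℝ) (x k))).toReal)
    (hδlt : ∀ k, 1 ≤ k → k ≤ n → δ k < 1)
    (s : ℝ) (hspos : 0 < s)
    (kstar : ℕ) (hk1 : 1 ≤ kstar) (hkn : kstar ≤ n) (hsx : s = x kstar)
    (p : ℕ → ℝ)
    (hp1 : p 1 = (if s ≤ x 1 then (1:ℝ) else 0) * (1 - δ 1))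
    (hpk : ∀ k, 2 ≤ k → k ≤ n →
      p k = ((if s ≤ x k then (1:ℝ) else 0) - (if s ≤ x (k - 1) then (1:ℝ) else 0))
        * (1 - δ k))
    (w : (Fin d → ℝ) → ℝ)
    (hw : ∀ u, w u = (∑ k ∈ Finset.Icc 1 n, p k) *
      (∑ k ∈ (Finset.Icc 1 n).filter (fun k => x k ≤ ⨆ i, u i),
        p k / (1 - δ k))⁻¹) :
    (∑ k ∈ Finset.Icc 1 n, p k
        = 1 - (μ (Set.pi Set.univ fun _ => Set.Icc (0:ℝ) s)).toReal) ∧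
    (∀ u : Fin d → ℝ, (∀ i, u i ∈ Set.Icc (0:ℝ) 1) → s < ⨆ i, u i →
      (∑ k ∈ (Finset.Icc 1 n).filter (fun k => x k ≤ ⨆ i, u i),
          p k / (1 - δ k)) = 1 ∧
      w u = 1 - (μ (Set.pi Set.univ fun _ => Set.Icc (0:ℝ) s)).toReal) ∧
    ∫ u in {u : Fin d → ℝ | s < ⨆ i, u i}, w u ∂μ
      = (μ {u : Fin d → ℝ | s < ⨆ i, u i}).toReal ^ 2 := by
  haveI : Nonempty (Fin d) := ⟨⟨0, hd⟩⟩
  -- monotonicity of x on [1, n]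
  have hle : ∀ a b, 1 ≤ a → a ≤ b → b ≤ n → x a ≤ x b := by
    intro a b ha hab hbn
    induction b with
    | zero => omega
    | succ m ih =>
      rcases eq_or_lt_of_le hab with h | h
      · rw [h]
      · have hm : a ≤ m := by omega
        have h1 : 1 ≤ m := le_trans ha hm
        exact le_trans (ih hm (by omega)) (le_of_lt (hxmono m h1 (by omega)))
  have hlt : ∀ a b, 1 ≤ a → a < b → b ≤ n → x a < x b := by
    intro a b ha hab hbn
    have hb1 : b - 1 < b := by omega
    have := hxmono (b - 1) (by omega) (by omega)
    have hb : b - 1 + 1 = b := by omega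
    rw [hb] at this
    exact lt_of_le_of_lt (hle a (b - 1) ha (by omega) (by omega)) this
  -- s ≤ x k ↔ kstar ≤ k, on [1,n]
  have hiff : ∀ k, 1 ≤ k → k ≤ n → ((s ≤ x k) ↔ kstar ≤ k) := by
    intro k h1 h2
    constructor
    · intro h
      by_contra hc
      push_neg at hc
      exact absurd (hsx ▸ h) (not_le.mpr (hlt k kstar h1 hc hkn))
    · intro h
      rcases eq_or_lt_of_le h with h' | h'
      · rw [hsx, h']
      · exact le_of_lt (hsx ▸ hlt kstar k hk1 h' h2)
  have hk2 : 2 ≤ kstar := by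
    by_contra hc
    have : kstar = 1 := by omega
    rw [this, hx1] at hsx
    exact absurd hsx (ne_of_gt hspos)
  -- values of p
  have hpval : ∀ k ∈ Finset.Icc 1 n, p k = if k = kstar then 1 - δ kstar else 0 := by
    intro k hk
    simp only [Finset.mem_Icc] at hk
    rcases eq_or_lt_of_le hk.1 with h1 | h1
    · rw [← h1, hp1]
      have : ¬ (s ≤ x 1) := by rw [hx1]; exact not_le.mpr hspos
      rw [if_neg this, if_neg (by omega)]
      ring
    · rw [hpk k (by omega) hk.2]
      rw [if_congr (hiff k (by omega) hk.2) rfl rfl,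
        if_congr (hiff (k - 1) (by omega) (by omega)) rfl rfl]
      by_cases hkk : k = kstar
      · rw [if_pos hkk, if_pos (by omega), if_neg (by omega), hkk]
        ring
      · rw [if_neg hkk]
        by_cases hks : kstar ≤ k
        · rw [if_pos hks, if_pos (by omega)]; ring
        · rw [if_neg hks, if_neg (by omega)]; ring
  have hkmem : kstar ∈ Finset.Icc 1 n := Finset.mem_Icc.mpr ⟨hk1, hkn⟩
  have hδne : (1 : ℝ) - δ kstar ≠ 0 := sub_ne_zero.mpr (ne_of_gt (hδlt kstar hk1 hkn))
  -- part (i)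
  have hsum : ∑ k ∈ Finset.Icc 1 n, p k = 1 - δ kstar := by
    rw [Finset.sum_congr rfl hpval, Finset.sum_ite_eq' (Finset.Icc 1 n) kstar
      (fun _ => 1 - δ kstar), if_pos hkmem]
  have hδs : δ kstar = (μ (Set.pi Set.univ fun _ => Set.Icc (0:ℝ) s)).toReal := by
    rw [hδ kstar hk1 hkn, hsx]
  -- part (ii), for any u with s < ⨆ i, u i (cube hypothesis not needed)
  have hfil : ∀ u : Fin d → ℝ, s < ⨆ i, u i →
      (∑ k ∈ (Finset.Icc 1 n).filter (fun k => x k ≤ ⨆ i, u i),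
        p k / (1 - δ k)) = 1 := by
    intro u hu
    rw [Finset.sum_filter]
    have : ∀ k ∈ Finset.Icc 1 n,
        (if x k ≤ ⨆ i, u i then p k / (1 - δ k) else 0)
          = if k = kstar then 1 else 0 := by
      intro k hk
      by_cases hkk : k = kstar
      · subst hkk
        rw [if_pos (by rw [← hsx]; exact le_of_lt hu), if_pos rfl,
          hpval k hk, if_pos rfl, div_self hδne]
      · rw [if_neg hkk, hpval k hk, if_neg hkk, zero_div, ite_self]
    rw [Finset.sum_congr rfl this,
      Finset.sum_ite_eq' (Finset.Icc 1 n) kstar (fun _ => (1:ℝ)), if_pos hkmem]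
  have hwval : ∀ u : Fin d → ℝ, s < ⨆ i, u i →
      w u = 1 - (μ (Set.pi Set.univ fun _ => Set.Icc (0:ℝ) s)).toReal := by
    intro u hu
    rw [hw, hfil u hu, inv_one, mul_one, hsum, hδs]
  refine ⟨by rw [hsum, hδs], fun u _ hu => ⟨hfil u hu, hwval u hu⟩, ?_⟩
  -- part (iii)
  set S : Set (Fin d → ℝ) := {u : Fin d → ℝ | s < ⨆ i, u i} with hS
  have hMmeas : Measurable fun u : Fin d → ℝ => ⨆ i, u i := by
    have : (fun u : Fin d → ℝ => ⨆ i, u i)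
        = Finset.univ.sup' Finset.univ_nonempty (fun i (u : Fin d → ℝ) => u i) := by
      ext u
      rw [Finset.sup'_apply, Finset.sup'_univ_eq_ciSup]
    rw [this]
    exact Finset.measurable_sup' _ (fun i _ => measurable_pi_apply i)
  have hSm : MeasurableSet S := measurableSet_lt measurable_const hMmeas
  set A : Set (Fin d → ℝ) := Set.pi Set.univ fun _ => Set.Icc (0:ℝ) s with hA
  have hAm : MeasurableSet A :=
    MeasurableSet.univ_pi fun _ => measurableSet_Icc
  have hdisj : Disjoint A S := by
    rw [Set.disjoint_left]
    intro u huA huS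
    have : ⨆ i, u i ≤ s := ciSup_le fun i => (huA i trivial).2
    exact absurd huS (not_lt.mpr this)
  have hcover : Set.pi Set.univ (fun _ => Set.Icc (0:ℝ) 1) ⊆ A ∪ S := by
    intro u hu
    by_cases h : s < ⨆ i, u i
    · exact Or.inr h
    · refine Or.inl fun i _ => ⟨(hu i trivial).1, ?_⟩
      exact le_trans (le_ciSup (Set.Finite.bddAbove (Set.finite_range u)) i) (not_lt.1 h)
  have hAS : μ A + μ S = 1 := by
    rw [← measure_union hdisj hSm]
    refine le_antisymm (measure_mono (Set.subset_univ _) |>.trans_eq measure_univ) ?_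
    calc (1 : ℝ≥0∞) = μ (Set.pi Set.univ fun _ => Set.Icc (0:ℝ) 1) := hμcube.symm
      _ ≤ μ (A ∪ S) := measure_mono hcover
  have hμAne : μ A ≠ ⊤ := measure_ne_top μ A
  have hμSne : μ S ≠ ⊤ := measure_ne_top μ S
  have htoReal : (μ A).toReal + (μ S).toReal = 1 := by
    rw [← ENNReal.toReal_add hμAne hμSne, hAS, ENNReal.toReal_one]
  have hc : (1 : ℝ) - (μ A).toReal = (μ S).toReal := by linarith
  have : ∫ u in S, w u ∂μ = ∫ u in S, (μ S).toReal ∂μ := by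
    refine setIntegral_congr_fun hSm fun u hu => ?_
    rw [hwval u hu, hc]
  rw [this, setIntegral_const, smul_eq_mul, sq, measureReal_def]
end
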